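/- Let f : A ⇀ B and g : C ⇀ D be partial functions. Then there exist partial functions u : A ⇀ C and v : D ⇀ B with f = u⬝g⬝v if and only if rank(f) ≤ rank(g), i.e., the cardinality of ran(f) is at most the cardinality of ran(g). -/

import Mathlib

universe u

theorem Part.mem_bind_pfun_iff {α β : Type*} {f : Part α} {g : α →. β} {b : β} :
    b ∈ f.bind g ↔ ∃ a ∈ f, b ∈ g a := Part.mem_bind_iff

/-- For partial functions `f : A ⇀ B` and `g : C ⇀ D`, there exist partial
functions `p : A ⇀ C` and `q : D ⇀ B` with `f = p⬝g⬝q` (apply `p`, then `g`, then `q`) iff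
`rank f ≤ rank g`, i.e. `|ran f| ≤ |ran g|` as cardinals. -/
theorem leqJ_iff_PT {A B C D : Type u} (f : A →. B) (g : C →. D) :
    (∃ (p : A →. C) (q : D →. B), f = q.comp (g.comp p)) ↔
      Cardinal.mk ↥f.ran ≤ Cardinal.mk ↥g.ran := by
  classical
  constructor
  · rintro ⟨p, q, hf⟩
    rw [Cardinal.le_def]
    -- for each b ∈ ran f, pick d ∈ ran g
    have key : ∀ b : f.ran, ∃ d : g.ran, (b : B) ∈ q (d : D) := by
      rintro ⟨b, a, hb⟩
      rw [hf] at hb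
      simp only [PFun.comp_apply, Part.mem_bind_iff, Part.mem_bind_pfun_iff] at hb
      obtain ⟨d, ⟨c, hc, hd⟩, hq⟩ := hb
      exact ⟨⟨d, c, hd⟩, hq⟩
    choose i hi using key
    refine ⟨⟨i, ?_⟩⟩
    intro b₁ b₂ h
    have h1 := hi b₁
    have h2 := hi b₂
    rw [h] at h1
    exact Subtype.ext (Part.mem_unique h1 h2)
  · intro h
    rw [Cardinal.le_def] at h
    obtain ⟨e⟩ := h
    -- choose preimages under g
    have key : ∀ d : g.ran, ∃ c : C, (d : D) ∈ g c := fun d => d.2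
    choose cw hcw using key
    refine ⟨fun a => Part.assert (f a).Dom fun h =>
        Part.some (cw (e ⟨(f a).get h, a, Part.get_mem h⟩)),
      fun d => Part.assert (∃ b : f.ran, ((e b : g.ran) : D) = d) fun h =>
        Part.some (h.choose : B), ?_⟩
    refine PFun.ext fun a b => ?_
    unfold PFun.comp
    simp only [PFun.comp_apply, Part.mem_bind_iff, Part.mem_bind_pfun_iff, Part.mem_assert_iff, Part.mem_some_iff]
    constructor
    · intro hb
      have hdom : (f a).Dom := Part.dom_iff_mem.mpr ⟨b, hb⟩
      have hget : (f a).get hdom = b := Part.get_eq_of_mem hb hdom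
      set bb : f.ran := ⟨(f a).get hdom, a, Part.get_mem hdom⟩ with hbb
      refine ⟨(e bb : D), ⟨cw (e bb), ⟨hdom, rfl⟩, hcw (e bb)⟩, ⟨bb, rfl⟩, ?_⟩
      have hch : (Exists.choose (⟨bb, rfl⟩ : ∃ b' : f.ran, ((e b' : g.ran) : D) = (e bb : D)))
          = bb := by
        have := Exists.choose_spec (⟨bb, rfl⟩ : ∃ b' : f.ran, ((e b' : g.ran) : D) = (e bb : D))
        exact e.injective (Subtype.ext this)
      rw [hch, hbb]
      exact hget.symm
    · rintro ⟨d, ⟨c, ⟨hdom, hc⟩, hd⟩, hex, hb⟩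
      -- d ∈ g c where c = cw (e bb); g c single-valued
      set bb : f.ran := ⟨(f a).get hdom, a, Part.get_mem hdom⟩ with hbb
      rw [hc] at hd
      have hd' : d = ((e bb : g.ran) : D) := Part.mem_unique hd (hcw (e bb))
      have heq : hex.choose = bb :=
        e.injective (Subtype.ext (hex.choose_spec.trans hd'))
      rw [heq] at hb
      rw [hb]
      exact Part.get_mem hdom
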